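/- Let Π be an instance of NotAllEqual 3-SAT with n clauses and G(Π)=(V,E), b, r the associated construction. In every (b,r)-partition of E, for every clause C (original or copy), the number of blue edges among the three edges joining s to U^C equals the number of blue edges among the three matching edges E^C (and likewise for red edges). -/
import Mathlib


/-!
Common definitions for formalizing the NP-completeness reduction from
NotAllEqual 3-SAT to (b,r)-partitions of graphs.

An instance of NotAllEqual 3-SAT with variables in `α` and `n` clauses is
given by `cl : Fin n → Fin 3 → α`, clause `i` consisting of the three
(distinct) variables `cl i 0, cl i 1, cl i 2`.

The vertex set of the associated graph `G(Π)`: the special vertex `s`,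
the `u`-vertices `u i o j` and the `v`-vertices `v i o j`, where `i : Fin n`
is a clause index, `o : Bool` tells whether we are in the gadget of the
original clause (`false`) or of its copy (`true`), and `j : Fin 3` is the
position of a variable inside the clause.
-/

inductive GVert (n : ℕ) : Type
  | s : GVert n
  | u : Fin n → Bool → Fin 3 → GVert n
  | v : Fin n → Bool → Fin 3 → GVert n
  deriving DecidableEq

/-- The occurrences of the variable `x`: the pairs (clause index, position)
where `x` appears. -/
def occs {α : Type*} [DecidableEq α] {n : ℕ} (cl : Fin n → Fin 3 → α) (x : α) :
    Finset (Fin n × Fin 3) :=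
  Finset.univ.filter (fun p => cl p.1 p.2 = x)

/-- The cyclic successor of an occurrence `p` among the occurrences of the
variable sitting at `p`; this is used to build the cycle `Δ_x`. -/
noncomputable def nextOcc {α : Type*} [DecidableEq α] {n : ℕ}
    (cl : Fin n → Fin 3 → α) (p : Fin n × Fin 3) : Fin n × Fin 3 :=
  (occs cl (cl p.1 p.2)).toList.next p (by simp [occs, Finset.mem_toList])

/-- The edges of `G(Π)`: the star at `s`, the triangles on `U^C`, the
matchings `E^C`, and the cycles `Δ_x` (which alternate `v`-vertices of
original-clause gadgets and of copy gadgets; the cycle for the variable `x`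
is `v p₁ false, v p₁ true, v p₂ false, v p₂ true, …` over the occurrences
`p₁, p₂, …` of `x` in cyclic order). -/
inductive EdgeSpec {α : Type*} [DecidableEq α] {n : ℕ} (cl : Fin n → Fin 3 → α) :
    GVert n → GVert n → Prop
  | star (i : Fin n) (o : Bool) (j : Fin 3) : EdgeSpec cl .s (.u i o j)
  | tri (i : Fin n) (o : Bool) {j j' : Fin 3} (h : j ≠ j') :
      EdgeSpec cl (.u i o j) (.u i o j')
  | mat (i : Fin n) (o : Bool) (j : Fin 3) : EdgeSpec cl (.u i o j) (.v i o j)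
  | cycA (p : Fin n × Fin 3) : EdgeSpec cl (.v p.1 false p.2) (.v p.1 true p.2)
  | cycB (p : Fin n × Fin 3) :
      EdgeSpec cl (.v p.1 true p.2) (.v (nextOcc cl p).1 false (nextOcc cl p).2)

/-- The graph `G(Π)` associated to the NotAllEqual 3-SAT instance. -/
noncomputable def gadgetGraph {α : Type*} [DecidableEq α] {n : ℕ}
    (cl : Fin n → Fin 3 → α) : SimpleGraph (GVert n) :=
  SimpleGraph.fromRel (EdgeSpec cl)

/-- The blue outdegree prescription `b`. -/
def bvec (n : ℕ) : GVert n → ℕ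
  | .s => 3 * n
  | .u _ _ _ => 1
  | .v _ o _ => if o then 0 else 1

/-- The red outdegree prescription `r`. -/
def rvec (n : ℕ) : GVert n → ℕ
  | .s => 3 * n
  | .u _ _ _ => 1
  | .v _ o _ => if o then 1 else 0

/-- `dir` is an orientation of the edge set `F`: every directed pair lies in
`F`, and every edge of `F` gets exactly one direction. -/
def IsOrientation {V : Type*} (F : Set (Sym2 V)) (dir : V → V → Prop) : Prop :=
  (∀ a b, dir a b → s(a, b) ∈ F) ∧
    ∀ a b, s(a, b) ∈ F → (dir a b ∨ dir b a) ∧ ¬(dir a b ∧ dir b a)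

/-- `dir` is an `m`-orientation of `F`: an orientation in which exactly `m v`
arcs leave each vertex `v`. -/
def IsMOrientation {V : Type*} (F : Set (Sym2 V)) (m : V → ℕ)
    (dir : V → V → Prop) : Prop :=
  IsOrientation F dir ∧ ∀ v, Nat.card {w // dir v w} = m v

/-- `B` and `R` partition the edges of `G` into two spanning trees. -/
def IsTreePartition {V : Type*} (G B R : SimpleGraph V) : Prop :=
  B ≤ G ∧ R ≤ G ∧ B.IsTree ∧ R.IsTree ∧
    Disjoint B.edgeSet R.edgeSet ∧ B.edgeSet ∪ R.edgeSet = G.edgeSet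

/-- `(B, R)` is a `(b,r)`-partition of (the edge set of) `G`: a partition
into a blue spanning tree having a `b`-orientation and a red spanning tree
having an `r`-orientation. -/
def IsBRPartition {V : Type*} (G : SimpleGraph V) (b r : V → ℕ)
    (B R : SimpleGraph V) : Prop :=
  IsTreePartition G B R ∧
    (∃ d, IsMOrientation B.edgeSet b d) ∧ ∃ d, IsMOrientation R.edgeSet r d

/-- `G` admits some `(b,r)`-partition. -/
def HasBRPartition {V : Type*} (G : SimpleGraph V) (b r : V → ℕ) : Prop :=
  ∃ B R, IsBRPartition G b r B R

/-- The blue/red coloring `c` (`true` = blue, `false` = red) satisfies the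
NotAllEqual 3-SAT instance: every clause contains a blue and a red variable. -/
def NAESatisfies {α : Type*} {n : ℕ} (cl : Fin n → Fin 3 → α) (c : α → Bool) :
    Prop :=
  ∀ i : Fin n, (∃ j, c (cl i j) = true) ∧ ∃ j, c (cl i j) = false

/-- The matching edge `u^C_x v^C_x` at occurrence `p`, in the original gadget
(`o = false`) or the copy gadget (`o = true`). -/
def mEdge {n : ℕ} (p : Fin n × Fin 3) (o : Bool) : Sym2 (GVert n) :=
  s(GVert.u p.1 o p.2, GVert.v p.1 o p.2)


section Stmt10Aux

open SimpleGraph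

open Classical in
/-- Classical indicator of a proposition. -/
noncomputable def pind (p : Prop) : ℕ := if p then 1 else 0

lemma pind_pos {p : Prop} (h : p) : pind p = 1 := by simp [pind, h]

lemma pind_neg {p : Prop} (h : ¬ p) : pind p = 0 := by simp [pind, h]

lemma ncard_single_inter {β : Type*} (e : β) (S : Set β) :
    (({e} : Set β) ∩ S).ncard = pind (e ∈ S) := by
  by_cases h : e ∈ S
  · have : ({e} : Set β) ∩ S = {e} := by
      ext x; simp only [Set.mem_inter_iff, Set.mem_singleton_iff]
      exact ⟨fun hx => hx.1, fun hx => ⟨hx, hx ▸ h⟩⟩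
    rw [this, Set.ncard_singleton, pind_pos h]
  · have : ({e} : Set β) ∩ S = ∅ := by
      ext x; simp only [Set.mem_inter_iff, Set.mem_singleton_iff, Set.mem_empty_iff_false,
        iff_false, not_and]
      rintro rfl; exact h
    rw [this, Set.ncard_empty, pind_neg h]

lemma ncard_triple_inter {β : Type*} {e1 e2 e3 : β} (h12 : e1 ≠ e2) (h13 : e1 ≠ e3)
    (h23 : e2 ≠ e3) (S : Set β) :
    (({e1, e2, e3} : Set β) ∩ S).ncard
      = pind (e1 ∈ S) + pind (e2 ∈ S) + pind (e3 ∈ S) := by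
  have hsplit : ({e1, e2, e3} : Set β) ∩ S
      = (({e1} : Set β) ∩ S) ∪ ((({e2} : Set β) ∩ S) ∪ (({e3} : Set β) ∩ S)) := by
    ext x
    simp only [Set.mem_inter_iff, Set.mem_insert_iff, Set.mem_singleton_iff, Set.mem_union]
    tauto
  have hd1 : Disjoint (({e1} : Set β) ∩ S) ((({e2} : Set β) ∩ S) ∪ (({e3} : Set β) ∩ S)) := by
    rw [Set.disjoint_left]
    rintro x ⟨rfl, -⟩ hx
    rcases hx with ⟨h, -⟩ | ⟨h, -⟩
    · exact h12 h
    · exact h13 h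
  have hd2 : Disjoint (({e2} : Set β) ∩ S) (({e3} : Set β) ∩ S) := by
    rw [Set.disjoint_left]
    rintro x ⟨rfl, -⟩ ⟨h, -⟩
    exact h23 h
  rw [hsplit, Set.ncard_union_eq hd1 ((Set.finite_singleton _).inter_of_left _)
      (((Set.finite_singleton _).inter_of_left _).union
        ((Set.finite_singleton _).inter_of_left _)),
    Set.ncard_union_eq hd2 ((Set.finite_singleton _).inter_of_left _)
      ((Set.finite_singleton _).inter_of_left _),
    ncard_single_inter, ncard_single_inter, ncard_single_inter]
  ring

instance gvertFinite {n : ℕ} : Finite (GVert n) := by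
  refine Finite.of_surjective
    (fun x : Option ((Fin n × Bool × Fin 3) ⊕ (Fin n × Bool × Fin 3)) =>
      match x with
      | none => GVert.s
      | some (.inl (i, o, j)) => GVert.u i o j
      | some (.inr (i, o, j)) => GVert.v i o j) ?_
  rintro (_ | ⟨i, o, j⟩ | ⟨i, o, j⟩)
  · exact ⟨none, rfl⟩
  · exact ⟨some (.inl (i, o, j)), rfl⟩
  · exact ⟨some (.inr (i, o, j)), rfl⟩

lemma fin3_eq (j : Fin 3) : j = 0 ∨ j = 1 ∨ j = 2 := by
  revert j; decide

variable {α : Type*} [DecidableEq α] {n : ℕ} {cl : Fin n → Fin 3 → α}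

lemma adj_s_iff {w : GVert n} :
    (gadgetGraph cl).Adj GVert.s w ↔ ∃ i o j, w = GVert.u i o j := by
  rw [gadgetGraph, SimpleGraph.fromRel_adj]
  constructor
  · rintro ⟨hne, h | h⟩
    · cases h with
      | star i o j => exact ⟨i, o, j, rfl⟩
    · cases h
  · rintro ⟨i, o, j, rfl⟩
    exact ⟨by simp, Or.inl (EdgeSpec.star i o j)⟩

lemma adj_u_iff {i : Fin n} {o : Bool} {j : Fin 3} {w : GVert n} :
    (gadgetGraph cl).Adj (GVert.u i o j) w ↔
      w = GVert.s ∨ (∃ j', j ≠ j' ∧ w = GVert.u i o j') ∨ w = GVert.v i o j := by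
  rw [gadgetGraph, SimpleGraph.fromRel_adj]
  constructor
  · rintro ⟨hne, h | h⟩
    · cases h with
      | tri i o h => exact Or.inr (Or.inl ⟨_, h, rfl⟩)
      | mat i o j => exact Or.inr (Or.inr rfl)
    · cases h with
      | star i o j => exact Or.inl rfl
      | tri i o h => exact Or.inr (Or.inl ⟨_, Ne.symm h, rfl⟩)
  · rintro (rfl | ⟨j', hj, rfl⟩ | rfl)
    · exact ⟨by simp, Or.inr (EdgeSpec.star i o j)⟩
    · exact ⟨by simp [hj], Or.inl (EdgeSpec.tri i o hj)⟩
    · exact ⟨by simp, Or.inl (EdgeSpec.mat i o j)⟩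

lemma star_mem_edge (i : Fin n) (o : Bool) (j : Fin 3) :
    s(GVert.s, GVert.u i o j) ∈ (gadgetGraph cl).edgeSet := by
  rw [SimpleGraph.mem_edgeSet, adj_s_iff]; exact ⟨i, o, j, rfl⟩

lemma tri_mem_edge (i : Fin n) (o : Bool) {j j' : Fin 3} (h : j ≠ j') :
    s(GVert.u i o j, GVert.u i o j') ∈ (gadgetGraph cl).edgeSet := by
  rw [SimpleGraph.mem_edgeSet, adj_u_iff]; exact Or.inr (Or.inl ⟨j', h, rfl⟩)

lemma mat_mem_edge (i : Fin n) (o : Bool) (j : Fin 3) :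
    s(GVert.u i o j, GVert.v i o j) ∈ (gadgetGraph cl).edgeSet := by
  rw [SimpleGraph.mem_edgeSet, adj_u_iff]; exact Or.inr (Or.inr rfl)

lemma no_triangle {V : Type*} {X : SimpleGraph V} (hX : X.IsAcyclic) {a b c : V}
    (hab : X.Adj a b) (hbc : X.Adj b c) (hca : X.Adj c a) : False := by
  rw [SimpleGraph.isAcyclic_iff_path_unique] at hX
  have h2 := hX ⟨SimpleGraph.Walk.cons hab SimpleGraph.Walk.nil, by
      simp [SimpleGraph.Walk.cons_isPath_iff, hab.ne]⟩
    ⟨SimpleGraph.Walk.cons hca.symm (SimpleGraph.Walk.cons hbc.symm SimpleGraph.Walk.nil), by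
      simp [SimpleGraph.Walk.cons_isPath_iff, hab.ne, hca.ne', hbc.ne']⟩
  have h3 := congrArg (fun r : X.Path a b => r.val.length) h2
  simp at h3

lemma no_quad {V : Type*} {X : SimpleGraph V} (hX : X.IsAcyclic) {a b c d : V}
    (hab : X.Adj a b) (hbc : X.Adj b c) (hcd : X.Adj c d) (hda : X.Adj d a)
    (hac : a ≠ c) (hbd : b ≠ d) : False := by
  rw [SimpleGraph.isAcyclic_iff_path_unique] at hX
  have h2 := hX ⟨SimpleGraph.Walk.cons hab (SimpleGraph.Walk.cons hbc SimpleGraph.Walk.nil), by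
      simp [SimpleGraph.Walk.cons_isPath_iff, hab.ne, hbc.ne, hac]⟩
    ⟨SimpleGraph.Walk.cons hda.symm (SimpleGraph.Walk.cons hcd.symm SimpleGraph.Walk.nil), by
      simp [SimpleGraph.Walk.cons_isPath_iff, hda.ne', hcd.ne', hac]⟩
  have h3 := congrArg (fun r : X.Path a c => r.val.support) h2
  simp [SimpleGraph.Walk.support_cons] at h3
  exact hbd h3

lemma pind_dir {V : Type*} {F : Set (Sym2 V)} {d : V → V → Prop}
    (h : IsOrientation F d) (a b : V) :
    pind (s(a, b) ∈ F) = pind (d a b) + pind (d b a) := by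
  by_cases hm : s(a, b) ∈ F
  · obtain ⟨hor, hnand⟩ := h.2 a b hm
    by_cases h1 : d a b
    · rw [pind_pos hm, pind_pos h1, pind_neg (fun h2 => hnand ⟨h1, h2⟩)]
    · rw [pind_pos hm, pind_neg h1, pind_pos (hor.resolve_left h1)]
  · rw [pind_neg hm, pind_neg (fun h1 => hm (h.1 a b h1)),
      pind_neg (fun h2 => hm (by rw [Sym2.eq_swap]; exact h.1 b a h2))]

lemma pind_le_pind_dir {V : Type*} {F : Set (Sym2 V)} {d : V → V → Prop}
    (h : IsOrientation F d) (a b : V) :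
    pind (d a b) ≤ pind (s(a, b) ∈ F) := by
  rw [pind_dir h a b]; exact Nat.le_add_right _ _

lemma pind_partition {V : Type*} {B R G : SimpleGraph V}
    (hdisj : Disjoint B.edgeSet R.edgeSet) (hunion : B.edgeSet ∪ R.edgeSet = G.edgeSet)
    {e : Sym2 V} (he : e ∈ G.edgeSet) :
    pind (e ∈ B.edgeSet) + pind (e ∈ R.edgeSet) = 1 := by
  by_cases hb : e ∈ B.edgeSet
  · rw [pind_pos hb, pind_neg (fun hr => (Set.disjoint_left.1 hdisj) hb hr)]
  · have hr : e ∈ R.edgeSet := by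
      have := hunion ▸ he
      rcases (Set.mem_union _ _ _).1 (hunion.symm ▸ he) with h | h
      · exact absurd h hb
      · exact h
    rw [pind_pos hr, pind_neg hb]

lemma pind_uniq {V : Type*} {P : V → Prop} {w1 w2 w3 : V} (h12 : w1 ≠ w2) (h13 : w1 ≠ w3)
    (h23 : w2 ≠ w3) (hex : ∃ w, P w) (huniq : ∀ w w', P w → P w' → w = w')
    (hmem : ∀ w, P w → w = w1 ∨ w = w2 ∨ w = w3) :
    pind (P w1) + pind (P w2) + pind (P w3) = 1 := by
  obtain ⟨w, hw⟩ := hex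
  rcases hmem w hw with rfl | rfl | rfl
  · rw [pind_pos hw, pind_neg (fun h => h12 (huniq _ _ hw h)),
      pind_neg (fun h => h13 (huniq _ _ hw h))]
  · rw [pind_pos hw, pind_neg (fun h => h12 (huniq _ _ h hw)),
      pind_neg (fun h => h23 (huniq _ _ hw h))]
  · rw [pind_pos hw, pind_neg (fun h => h13 (huniq _ _ h hw)),
      pind_neg (fun h => h23 (huniq _ _ h hw))]

/-- In any `(b,r)`-partition with orientations `dB`, `dR`, no arc enters `s`. -/
lemma no_arc_into_s {B R : SimpleGraph (GVert n)}
    (hBle : B ≤ gadgetGraph cl) (hRle : R ≤ gadgetGraph cl)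
    (hdisj : Disjoint B.edgeSet R.edgeSet)
    (hunion : B.edgeSet ∪ R.edgeSet = (gadgetGraph cl).edgeSet)
    {dB dR : GVert n → GVert n → Prop}
    (hdB : IsMOrientation B.edgeSet (bvec n) dB)
    (hdR : IsMOrientation R.edgeSet (rvec n) dR) :
    (∀ w, ¬ dB w GVert.s) ∧ (∀ w, ¬ dR w GVert.s) := by
  classical
  have key : ∀ (X : SimpleGraph (GVert n)) (d : GVert n → GVert n → Prop),
      X ≤ gadgetGraph cl → IsMOrientation X.edgeSet (fun _ => (0:ℕ)) d →
      True := fun _ _ _ _ => trivial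
  -- out-sets and in-sets
  set OB : Set (GVert n) := {w | dB GVert.s w} with hOBdef
  set IB : Set (GVert n) := {w | dB w GVert.s} with hIBdef
  set OR : Set (GVert n) := {w | dR GVert.s w} with hORdef
  set IR : Set (GVert n) := {w | dR w GVert.s} with hIRdef
  have hOBcard : OB.ncard = 3 * n := by
    have h := hdB.2 GVert.s
    rw [← Nat.card_coe_set_eq]
    exact h
  have hORcard : OR.ncard = 3 * n := by
    have h := hdR.2 GVert.s
    rw [← Nat.card_coe_set_eq]
    exact h
  have hNB : B.neighborSet GVert.s = OB ∪ IB := by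
    ext w
    simp only [SimpleGraph.mem_neighborSet, Set.mem_union, hOBdef, hIBdef, Set.mem_setOf_eq]
    constructor
    · intro h
      exact (hdB.1.2 GVert.s w (B.mem_edgeSet.2 h)).1
    · rintro (h | h)
      · exact B.mem_edgeSet.1 (hdB.1.1 _ _ h)
      · exact (B.mem_edgeSet.1 (hdB.1.1 _ _ h)).symm
  have hNR : R.neighborSet GVert.s = OR ∪ IR := by
    ext w
    simp only [SimpleGraph.mem_neighborSet, Set.mem_union, hORdef, hIRdef, Set.mem_setOf_eq]
    constructor
    · intro h
      exact (hdR.1.2 GVert.s w (R.mem_edgeSet.2 h)).1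
    · rintro (h | h)
      · exact R.mem_edgeSet.1 (hdR.1.1 _ _ h)
      · exact (R.mem_edgeSet.1 (hdR.1.1 _ _ h)).symm
  have hdOIB : Disjoint OB IB := by
    rw [Set.disjoint_left]
    intro w h1 h2
    exact (hdB.1.2 GVert.s w (hdB.1.1 _ _ h1)).2 ⟨h1, h2⟩
  have hdOIR : Disjoint OR IR := by
    rw [Set.disjoint_left]
    intro w h1 h2
    exact (hdR.1.2 GVert.s w (hdR.1.1 _ _ h1)).2 ⟨h1, h2⟩
  have hNBcard : (B.neighborSet GVert.s).ncard = 3 * n + IB.ncard := by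
    rw [hNB, Set.ncard_union_eq hdOIB (Set.toFinite _) (Set.toFinite _), hOBcard]
  have hNRcard : (R.neighborSet GVert.s).ncard = 3 * n + IR.ncard := by
    rw [hNR, Set.ncard_union_eq hdOIR (Set.toFinite _) (Set.toFinite _), hORcard]
  have hNG : (gadgetGraph cl).neighborSet GVert.s
      = B.neighborSet GVert.s ∪ R.neighborSet GVert.s := by
    ext w
    simp only [SimpleGraph.mem_neighborSet, Set.mem_union, ← SimpleGraph.mem_edgeSet,
      ← hunion, Set.mem_union]
  have hdNBR : Disjoint (B.neighborSet GVert.s) (R.neighborSet GVert.s) := by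
    rw [Set.disjoint_left]
    intro w h1 h2
    exact (Set.disjoint_left.1 hdisj) (B.mem_edgeSet.2 h1) (R.mem_edgeSet.2 h2)
  have hNGcard : ((gadgetGraph cl).neighborSet GVert.s).ncard = 6 * n := by
    have hrange : (gadgetGraph cl).neighborSet GVert.s
        = Set.range (fun p : Fin n × Bool × Fin 3 => GVert.u p.1 p.2.1 p.2.2) := by
      ext w
      simp only [SimpleGraph.mem_neighborSet, adj_s_iff, Set.mem_range, Prod.exists]
      constructor
      · rintro ⟨i, o, j, rfl⟩; exact ⟨i, o, j, rfl⟩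
      · rintro ⟨i, o, j, rfl⟩; exact ⟨i, o, j, rfl⟩
    have hinj : Function.Injective (fun p : Fin n × Bool × Fin 3 => GVert.u p.1 p.2.1 p.2.2) := by
      rintro ⟨i, o, j⟩ ⟨i', o', j'⟩ h
      simp only [GVert.u.injEq] at h
      exact Prod.ext h.1 (Prod.ext h.2.1 h.2.2)
    rw [hrange, ← Nat.card_coe_set_eq, Nat.card_range_of_injective hinj]
    simp only [Nat.card_eq_fintype_card, Fintype.card_prod, Fintype.card_fin, Fintype.card_bool]
    ring
  have heq : 6 * n = (3 * n + IB.ncard) + (3 * n + IR.ncard) := by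
    rw [← hNBcard, ← hNRcard, ← Set.ncard_union_eq hdNBR (Set.toFinite _) (Set.toFinite _),
      ← hNG, hNGcard]
  have hIB : IB = ∅ := by
    rw [← Set.ncard_eq_zero (Set.toFinite _)]
    omega
  have hIR : IR = ∅ := by
    rw [← Set.ncard_eq_zero (Set.toFinite _)]
    omega
  constructor
  · intro w hw
    exact absurd (show w ∈ IB from hw) (by rw [hIB]; exact Set.notMem_empty w)
  · intro w hw
    exact absurd (show w ∈ IR from hw) (by rw [hIR]; exact Set.notMem_empty w)

lemma star_tri_bound {n : ℕ} (X : SimpleGraph (GVert n)) (hX : X.IsAcyclic)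
    (i : Fin n) (o : Bool) :
    pind (s(GVert.s, GVert.u i o 0) ∈ X.edgeSet) + pind (s(GVert.s, GVert.u i o 1) ∈ X.edgeSet)
      + pind (s(GVert.s, GVert.u i o 2) ∈ X.edgeSet)
      + pind (s(GVert.u i o 0, GVert.u i o 1) ∈ X.edgeSet)
      + pind (s(GVert.u i o 0, GVert.u i o 2) ∈ X.edgeSet)
      + pind (s(GVert.u i o 1, GVert.u i o 2) ∈ X.edgeSet) ≤ 3 := by
  have f01 : (0 : Fin 3) ≠ 1 := by decide
  have f02 : (0 : Fin 3) ≠ 2 := by decide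
  have f12 : (1 : Fin 3) ≠ 2 := by decide
  simp only [SimpleGraph.mem_edgeSet]
  have c1 : ¬(X.Adj (GVert.u i o 0) (GVert.u i o 1) ∧ X.Adj (GVert.u i o 0) (GVert.u i o 2)
      ∧ X.Adj (GVert.u i o 1) (GVert.u i o 2)) := by
    rintro ⟨h01, h02, h12⟩
    exact no_triangle hX h01 h12 h02.symm
  have c2 : ¬(X.Adj GVert.s (GVert.u i o 0) ∧ X.Adj GVert.s (GVert.u i o 1)
      ∧ X.Adj (GVert.u i o 0) (GVert.u i o 1)) := by
    rintro ⟨p0, p1, t⟩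
    exact no_triangle hX p0 t p1.symm
  have c3 : ¬(X.Adj GVert.s (GVert.u i o 0) ∧ X.Adj GVert.s (GVert.u i o 2)
      ∧ X.Adj (GVert.u i o 0) (GVert.u i o 2)) := by
    rintro ⟨p0, p2, t⟩
    exact no_triangle hX p0 t p2.symm
  have c4 : ¬(X.Adj GVert.s (GVert.u i o 1) ∧ X.Adj GVert.s (GVert.u i o 2)
      ∧ X.Adj (GVert.u i o 1) (GVert.u i o 2)) := by
    rintro ⟨p1, p2, t⟩
    exact no_triangle hX p1 t p2.symm
  have c5 : ¬(X.Adj GVert.s (GVert.u i o 0) ∧ X.Adj GVert.s (GVert.u i o 1)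
      ∧ X.Adj (GVert.u i o 0) (GVert.u i o 2) ∧ X.Adj (GVert.u i o 1) (GVert.u i o 2)) := by
    rintro ⟨p0, p1, t02, t12⟩
    exact no_quad hX p0 t02 t12.symm p1.symm (by simp) (by simp [f01])
  have c6 : ¬(X.Adj GVert.s (GVert.u i o 0) ∧ X.Adj GVert.s (GVert.u i o 2)
      ∧ X.Adj (GVert.u i o 0) (GVert.u i o 1) ∧ X.Adj (GVert.u i o 1) (GVert.u i o 2)) := by
    rintro ⟨p0, p2, t01, t12⟩
    exact no_quad hX p0 t01 t12 p2.symm (by simp) (by simp [f02])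
  have c7 : ¬(X.Adj GVert.s (GVert.u i o 1) ∧ X.Adj GVert.s (GVert.u i o 2)
      ∧ X.Adj (GVert.u i o 0) (GVert.u i o 1) ∧ X.Adj (GVert.u i o 0) (GVert.u i o 2)) := by
    rintro ⟨p1, p2, t01, t02⟩
    exact no_quad hX p1 t01.symm t02 p2.symm (by simp) (by simp [f12])
  by_cases h0 : X.Adj GVert.s (GVert.u i o 0) <;>
    by_cases h1 : X.Adj GVert.s (GVert.u i o 1) <;>
    by_cases h2 : X.Adj GVert.s (GVert.u i o 2) <;>
    by_cases h3 : X.Adj (GVert.u i o 0) (GVert.u i o 1) <;>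
    by_cases h4 : X.Adj (GVert.u i o 0) (GVert.u i o 2) <;>
    by_cases h5 : X.Adj (GVert.u i o 1) (GVert.u i o 2) <;>
    simp_all [pind]

lemma out_arc_eq {α : Type*} [DecidableEq α] {n : ℕ} {cl : Fin n → Fin 3 → α}
    (X : SimpleGraph (GVert n)) (hXle : X ≤ gadgetGraph cl)
    {d : GVert n → GVert n → Prop} (hor : IsOrientation X.edgeSet d)
    (hnos : ∀ w, ¬ d w GVert.s) (i : Fin n) (o : Bool) {j j1 j2 : Fin 3}
    (hcard : Nat.card {w // d (GVert.u i o j) w} = 1)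
    (hjs : ∀ j' : Fin 3, j' ≠ j → j' = j1 ∨ j' = j2) (h12 : j1 ≠ j2) :
    pind (d (GVert.u i o j) (GVert.v i o j)) + pind (d (GVert.u i o j) (GVert.u i o j1))
      + pind (d (GVert.u i o j) (GVert.u i o j2)) = 1 := by
  rw [Nat.card_eq_one_iff_exists] at hcard
  obtain ⟨⟨w0, hw0⟩, huq⟩ := hcard
  refine pind_uniq (by simp) (by simp) (by simp [h12]) ⟨w0, hw0⟩ ?_ ?_
  · intro w w' hw hw'
    have e1 := congrArg Subtype.val (huq ⟨w, hw⟩)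
    have e2 := congrArg Subtype.val (huq ⟨w', hw'⟩)
    exact e1.trans e2.symm
  · intro w hw
    have hadj : (gadgetGraph cl).Adj (GVert.u i o j) w :=
      (gadgetGraph cl).mem_edgeSet.1 (SimpleGraph.edgeSet_mono hXle (hor.1 _ _ hw))
    rcases adj_u_iff.1 hadj with rfl | ⟨j', hj', rfl⟩ | rfl
    · exact absurd hw (hnos _)
    · rcases hjs j' (Ne.symm hj') with rfl | rfl
      · exact Or.inr (Or.inl rfl)
      · exact Or.inr (Or.inr rfl)
    · exact Or.inl rfl

end Stmt10Aux

/-- In every `(b,r)`-partition of `G(Π)`, for every clause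
gadget (original or copy), the number of blue edges among the three edges
joining `s` to `U^C` equals the number of blue edges in the matching `E^C`,
and likewise for red edges. -/
theorem stmt10 {α : Type*} [DecidableEq α] {n : ℕ} (cl : Fin n → Fin 3 → α)
    (hcl : ∀ i, Function.Injective (cl i)) (B R : SimpleGraph (GVert n))
    (hBR : IsBRPartition (gadgetGraph cl) (bvec n) (rvec n) B R) :
    ∀ (i : Fin n) (o : Bool),
      (({s(GVert.s, GVert.u i o 0), s(GVert.s, GVert.u i o 1),
          s(GVert.s, GVert.u i o 2)} :
          Set (Sym2 (GVert n))) ∩ B.edgeSet).ncard =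
        (({s(GVert.u i o 0, GVert.v i o 0), s(GVert.u i o 1, GVert.v i o 1),
            s(GVert.u i o 2, GVert.v i o 2)} :
            Set (Sym2 (GVert n))) ∩ B.edgeSet).ncard ∧
      (({s(GVert.s, GVert.u i o 0), s(GVert.s, GVert.u i o 1),
          s(GVert.s, GVert.u i o 2)} :
          Set (Sym2 (GVert n))) ∩ R.edgeSet).ncard =
        (({s(GVert.u i o 0, GVert.v i o 0), s(GVert.u i o 1, GVert.v i o 1),
            s(GVert.u i o 2, GVert.v i o 2)} :
            Set (Sym2 (GVert n))) ∩ R.edgeSet).ncard := by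
  classical
  obtain ⟨⟨hBle, hRle, hBtree, hRtree, hdisj, hunion⟩, ⟨dB, hdB⟩, ⟨dR, hdR⟩⟩ := hBR
  obtain ⟨hnoB, hnoR⟩ := no_arc_into_s hBle hRle hdisj hunion hdB hdR
  intro i o
  have f01 : (0 : Fin 3) ≠ 1 := by decide
  have f02 : (0 : Fin 3) ≠ 2 := by decide
  have f12 : (1 : Fin 3) ≠ 2 := by decide
  -- edge membership facts
  have pe : ∀ e ∈ (gadgetGraph cl).edgeSet,
      pind (e ∈ B.edgeSet) + pind (e ∈ R.edgeSet) = 1 :=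
    fun e he => pind_partition hdisj hunion he
  have hs0 := pe _ (star_mem_edge (cl := cl) i o 0)
  have hs1 := pe _ (star_mem_edge (cl := cl) i o 1)
  have hs2 := pe _ (star_mem_edge (cl := cl) i o 2)
  have ht01 := pe _ (tri_mem_edge (cl := cl) i o f01)
  have ht02 := pe _ (tri_mem_edge (cl := cl) i o f02)
  have ht12 := pe _ (tri_mem_edge (cl := cl) i o f12)
  have hm0 := pe _ (mat_mem_edge (cl := cl) i o 0)
  have hm1 := pe _ (mat_mem_edge (cl := cl) i o 1)
  have hm2 := pe _ (mat_mem_edge (cl := cl) i o 2)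
  have oB : IsOrientation B.edgeSet dB := hdB.1
  have oR : IsOrientation R.edgeSet dR := hdR.1
  -- direction decompositions for triangle edges
  have dB01 := pind_dir oB (GVert.u i o 0) (GVert.u i o 1)
  have dB02 := pind_dir oB (GVert.u i o 0) (GVert.u i o 2)
  have dB12 := pind_dir oB (GVert.u i o 1) (GVert.u i o 2)
  have dR01 := pind_dir oR (GVert.u i o 0) (GVert.u i o 1)
  have dR02 := pind_dir oR (GVert.u i o 0) (GVert.u i o 2)
  have dR12 := pind_dir oR (GVert.u i o 1) (GVert.u i o 2)
  -- direction decompositions for matching edges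
  have dBm0 := pind_dir oB (GVert.u i o 0) (GVert.v i o 0)
  have dBm1 := pind_dir oB (GVert.u i o 1) (GVert.v i o 1)
  have dBm2 := pind_dir oB (GVert.u i o 2) (GVert.v i o 2)
  have dRm0 := pind_dir oR (GVert.u i o 0) (GVert.v i o 0)
  have dRm1 := pind_dir oR (GVert.u i o 1) (GVert.v i o 1)
  have dRm2 := pind_dir oR (GVert.u i o 2) (GVert.v i o 2)
  -- unique out-arc at each u-vertex
  have uB0 := out_arc_eq B hBle oB hnoB i o (hdB.2 (GVert.u i o 0))
    (by decide : ∀ j' : Fin 3, j' ≠ 0 → j' = 1 ∨ j' = 2) f12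
  have uB1 := out_arc_eq B hBle oB hnoB i o (hdB.2 (GVert.u i o 1))
    (by decide : ∀ j' : Fin 3, j' ≠ 1 → j' = 0 ∨ j' = 2) f02
  have uB2 := out_arc_eq B hBle oB hnoB i o (hdB.2 (GVert.u i o 2))
    (by decide : ∀ j' : Fin 3, j' ≠ 2 → j' = 0 ∨ j' = 1) f01
  have uR0 := out_arc_eq R hRle oR hnoR i o (hdR.2 (GVert.u i o 0))
    (by decide : ∀ j' : Fin 3, j' ≠ 0 → j' = 1 ∨ j' = 2) f12
  have uR1 := out_arc_eq R hRle oR hnoR i o (hdR.2 (GVert.u i o 1))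
    (by decide : ∀ j' : Fin 3, j' ≠ 1 → j' = 0 ∨ j' = 2) f02
  have uR2 := out_arc_eq R hRle oR hnoR i o (hdR.2 (GVert.u i o 2))
    (by decide : ∀ j' : Fin 3, j' ≠ 2 → j' = 0 ∨ j' = 1) f01
  -- acyclicity bounds
  have bndB := star_tri_bound B hBtree.2 i o
  have bndR := star_tri_bound R hRtree.2 i o
  -- rewrite the goal in terms of indicators
  rw [ncard_triple_inter (by simp [f01]) (by simp [f02]) (by simp [f12]) B.edgeSet,
    ncard_triple_inter (by simp [f01]) (by simp [f02]) (by simp [f12]) B.edgeSet,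
    ncard_triple_inter (by simp [f01]) (by simp [f02]) (by simp [f12]) R.edgeSet,
    ncard_triple_inter (by simp [f01]) (by simp [f02]) (by simp [f12]) R.edgeSet]
  omega
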